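/- arXiv:1707.01616 — 2 statements merged into one kernel-verified Lean document; each statement's English description precedes it below -/
import Mathlib

section
/- The number of Smirnov words of length n over an alphabet of N symbols with prescribed frequency vector ν = (ν_1, ..., ν_N) (where ν_1 + ... + ν_N = n) equals the coefficient of y_1^{ν_1} ⋯ y_N^{ν_N} in the power series expansion of F(y_1, ..., y_N) = 1/(1 - (y_1/(1+y_1) + ... + y_N/(1+y_N))). -/
open MvPowerSeries

namespace SmirnovAux

variable {N : ℕ}

/-- Smirnov words with prescribed letter counts. -/
def Smir (ν : Fin N →₀ ℕ) : Set (List (Fin N)) :=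
  {w | w.Chain' (· ≠ ·) ∧ ∀ j, w.count j = ν j}

/-- Smirnov words with prescribed letter counts, not starting with `i`. -/
def SmirA (i : Fin N) (ν : Fin N →₀ ℕ) : Set (List (Fin N)) :=
  {w | w.Chain' (· ≠ ·) ∧ (∀ j, w.count j = ν j) ∧ w.head? ≠ some i}

/-- Smirnov words with prescribed letter counts, starting with `i`. -/
def SmirH (i : Fin N) (ν : Fin N →₀ ℕ) : Set (List (Fin N)) :=
  {w | w.Chain' (· ≠ ·) ∧ (∀ j, w.count j = ν j) ∧ w.head? = some i}

lemma sum_count (w : List (Fin N)) : ∑ j, w.count j = w.length := by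
  induction w with
  | nil => simp
  | cons a t ih =>
    simp only [List.count_cons, List.length_cons]
    rw [Finset.sum_add_distrib, ih]
    have : (∑ j : Fin N, if (a == j) = true then 1 else 0) = 1 := by
      simp only [beq_iff_eq]
      rw [Finset.sum_ite_eq (Finset.univ : Finset (Fin N)) a (fun _ => 1)]
      simp
    omega

lemma length_of_counts {ν : Fin N →₀ ℕ} {w : List (Fin N)}
    (h : ∀ j, w.count j = ν j) : w.length = ∑ j, ν j := by
  rw [← sum_count w]
  exact Finset.sum_congr rfl fun j _ => h j

lemma smir_finite (ν : Fin N →₀ ℕ) : (Smir ν).Finite := by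
  apply Set.Finite.subset (List.finite_length_eq (Fin N) (∑ j, ν j))
  intro w hw
  exact length_of_counts hw.2

lemma smirA_finite (i : Fin N) (ν : Fin N →₀ ℕ) : (SmirA i ν).Finite := by
  apply Set.Finite.subset (smir_finite ν)
  intro w hw
  exact ⟨hw.1, hw.2.1⟩

lemma smirH_finite (i : Fin N) (ν : Fin N →₀ ℕ) : (SmirH i ν).Finite := by
  apply Set.Finite.subset (smir_finite ν)
  intro w hw
  exact ⟨hw.1, hw.2.1⟩

instance (ν : Fin N →₀ ℕ) : Finite (Smir ν) := (smir_finite ν).to_subtype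
instance (i : Fin N) (ν : Fin N →₀ ℕ) : Finite (SmirA i ν) := (smirA_finite i ν).to_subtype
instance (i : Fin N) (ν : Fin N →₀ ℕ) : Finite (SmirH i ν) := (smirH_finite i ν).to_subtype

/-- Number of Smirnov words with counts `ν`. -/
noncomputable def cnt (ν : Fin N →₀ ℕ) : ℕ := Nat.card (Smir ν)

/-- Number of Smirnov words with counts `ν` not starting with `i`. -/
noncomputable def cntA (i : Fin N) (ν : Fin N →₀ ℕ) : ℕ := Nat.card (SmirA i ν)

/-- Number of Smirnov words with counts `ν` starting with `i`. -/
noncomputable def cntH (i : Fin N) (ν : Fin N →₀ ℕ) : ℕ := Nat.card (SmirH i ν)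

lemma cnt_zero : cnt (0 : Fin N →₀ ℕ) = 1 := by
  have : Smir (0 : Fin N →₀ ℕ) = {([] : List (Fin N))} := by
    ext w
    constructor
    · rintro ⟨-, hc⟩
      have : w.length = 0 := by
        rw [length_of_counts hc]; simp
      simpa [List.length_eq_zero_iff] using this
    · rintro rfl
      exact ⟨List.isChain_nil, fun j => by simp⟩
  rw [cnt, this]
  simp

lemma mem_head_count_pos {w : List (Fin N)} {i : Fin N} (h : w.head? = some i) :
    0 < w.count i :=
  List.count_pos_iff.2 (List.mem_of_mem_head? (by rw [h]; rfl))

lemma cntH_eq_zero {i : Fin N} {ν : Fin N →₀ ℕ} (hi : ν i = 0) : cntH i ν = 0 := by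
  have : IsEmpty (SmirH i ν) := by
    constructor
    rintro ⟨w, -, hcnt, hhead⟩
    have h1 := mem_head_count_pos hhead
    rw [hcnt i, hi] at h1
    exact absurd h1 (lt_irrefl 0)
  rw [cntH]
  exact Nat.card_of_isEmpty

lemma cntA_eq_cnt {i : Fin N} {ν : Fin N →₀ ℕ} (hi : ν i = 0) : cntA i ν = cnt ν := by
  have : SmirA i ν = Smir ν := by
    ext w
    constructor
    · rintro ⟨hc, hcnt, -⟩; exact ⟨hc, hcnt⟩
    · rintro ⟨hc, hcnt⟩
      refine ⟨hc, hcnt, fun hh => ?_⟩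
      have := mem_head_count_pos hh
      rw [hcnt i] at this
      omega
  rw [cntA, cnt, this]

lemma count_cons_eq (i j : Fin N) (t : List (Fin N)) :
    (i :: t).count j = t.count j + if i = j then 1 else 0 := by
  rw [List.count_cons]
  simp [beq_iff_eq]

lemma tail_mem {i : Fin N} {ν : Fin N →₀ ℕ} {w : List (Fin N)}
    (hw : w ∈ SmirH i ν) : w.tail ∈ SmirA i (ν - Finsupp.single i 1) := by
  obtain ⟨hc, hcnt, hhead⟩ := hw
  have hw' : i :: w.tail = w := List.cons_head?_tail (by rw [hhead]; rfl)
  have hc2 : (∀ y ∈ w.tail.head?, i ≠ y) ∧ w.tail.Chain' (· ≠ ·) :=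
    List.isChain_cons.1 (hw' ▸ hc)
  refine ⟨hc2.2, fun j => ?_, fun hh => hc2.1 i (by rw [hh]; rfl) rfl⟩
  have hcj : w.count j = w.tail.count j + if i = j then 1 else 0 := by
    conv_lhs => rw [← hw']
    exact count_cons_eq i j w.tail
  rw [Finsupp.tsub_apply, Finsupp.single_apply, ← hcnt j, hcj]
  by_cases hij : i = j
  · simp [hij]
  · simp [hij]

lemma cons_mem {i : Fin N} {ν : Fin N →₀ ℕ} (hi : ν i ≠ 0) {t : List (Fin N)}
    (ht : t ∈ SmirA i (ν - Finsupp.single i 1)) : (i :: t) ∈ SmirH i ν := by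
  obtain ⟨hc, hcnt, hhead⟩ := ht
  have hν : 0 < ν i := Nat.pos_of_ne_zero hi
  refine ⟨List.isChain_cons.2 ⟨fun y hy hiy => hhead ?_, hc⟩, fun j => ?_, rfl⟩
  · rw [Option.mem_def] at hy
    rw [hy, hiy]
  · rw [count_cons_eq, hcnt j, Finsupp.tsub_apply, Finsupp.single_apply]
    by_cases hij : i = j
    · subst hij
      simp
      omega
    · simp [hij]

lemma cntH_eq {i : Fin N} {ν : Fin N →₀ ℕ} (hi : ν i ≠ 0) :
    cntH i ν = cntA i (ν - Finsupp.single i 1) := by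
  apply Nat.card_congr
  refine ⟨fun w => ⟨w.1.tail, tail_mem w.2⟩, fun t => ⟨i :: t.1, cons_mem hi t.2⟩, ?_, ?_⟩
  · rintro ⟨w, hw⟩
    exact Subtype.ext (List.cons_head?_tail (by rw [hw.2.2]; rfl))
  · rintro ⟨t, ht⟩
    rfl

lemma cnt_split (i : Fin N) (ν : Fin N →₀ ℕ) : cnt ν = cntA i ν + cntH i ν := by
  classical
  have hg : Function.Bijective
      (fun p : (SmirA i ν) ⊕ (SmirH i ν) => (Sum.elim
        (fun w : SmirA i ν => (⟨w.1, w.2.1, w.2.2.1⟩ : Smir ν))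
        (fun w : SmirH i ν => (⟨w.1, w.2.1, w.2.2.1⟩ : Smir ν)) p)) := by
    constructor
    · rintro (⟨w, hw⟩ | ⟨w, hw⟩) (⟨v, hv⟩ | ⟨v, hv⟩) h <;>
        simp only [Sum.elim_inl, Sum.elim_inr, Subtype.ext_iff] at h
      · simp [h]
      · exfalso; apply hw.2.2; rw [h]; exact hv.2.2
      · exfalso; apply hv.2.2; rw [← h]; exact hw.2.2
      · simp [h]
    · rintro ⟨w, hc, hcnt⟩
      by_cases hh : w.head? = some i
      · exact ⟨Sum.inr ⟨w, hc, hcnt, hh⟩, rfl⟩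
      · exact ⟨Sum.inl ⟨w, hc, hcnt, hh⟩, rfl⟩
  rw [cnt, ← Nat.card_congr (Equiv.ofBijective _ hg), Nat.card_sum]
  rfl

lemma nat_card_sigma {α : Fin N → Type*} [∀ i, Finite (α i)] :
    Nat.card ((i : Fin N) × α i) = ∑ i, Nat.card (α i) := by
  letI := fun i => Fintype.ofFinite (α i)
  simp only [Nat.card_eq_fintype_card]
  exact Fintype.card_sigma

lemma cnt_head_decomp {ν : Fin N →₀ ℕ} (hν : ν ≠ 0) : cnt ν = ∑ i, cntH i ν := by
  classical
  have hne : ∀ w ∈ Smir ν, w ≠ [] := by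
    rintro w ⟨hc, hcnt⟩ h
    subst h
    apply hν
    ext j
    simpa using (hcnt j).symm
  have hg : Function.Bijective
      (fun p : (i : Fin N) × (SmirH i ν) => (⟨p.2.1, p.2.2.1, p.2.2.2.1⟩ : Smir ν)) := by
    constructor
    · rintro ⟨i, w, hw⟩ ⟨j, v, hv⟩ h
      simp only [Subtype.ext_iff] at h
      have hij : i = j := by
        have h1 := hw.2.2
        have h2 := hv.2.2
        rw [h] at h1
        rw [h1] at h2
        exact Option.some_injective _ h2
      subst hij
      simp [h]
    · rintro ⟨w, hc, hcnt⟩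
      obtain ⟨a, t, rfl⟩ := List.exists_cons_of_ne_nil (hne _ ⟨hc, hcnt⟩)
      exact ⟨⟨a, ⟨a :: t, hc, hcnt, rfl⟩⟩, rfl⟩
  rw [cnt, ← Nat.card_congr (Equiv.ofBijective _ hg), nat_card_sigma]
  rfl

/-- The generating function of Smirnov counts. -/
noncomputable def G (N : ℕ) : MvPowerSeries (Fin N) ℝ := fun ν => (cnt ν : ℝ)

/-- The generating function of Smirnov counts avoiding initial letter `i`. -/
noncomputable def A (i : Fin N) : MvPowerSeries (Fin N) ℝ := fun ν => (cntA i ν : ℝ)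

lemma coeff_G (ν : Fin N →₀ ℕ) : coeff ν (G N) = (cnt ν : ℝ) := rfl

lemma coeff_A (i : Fin N) (ν : Fin N →₀ ℕ) : coeff ν (A i) = (cntA i ν : ℝ) := rfl

lemma coeff_X_mul' (i : Fin N) (φ : MvPowerSeries (Fin N) ℝ) (ν : Fin N →₀ ℕ) :
    coeff ν (X i * φ) =
      if Finsupp.single i 1 ≤ ν then coeff (ν - Finsupp.single i 1) φ else 0 := by
  rw [X_def, coeff_monomial_mul]
  split <;> simp

lemma one_add_X_mul_A (i : Fin N) : (1 + X i) * A i = G N := by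
  ext ν
  rw [add_mul, one_mul, map_add, coeff_X_mul', coeff_A, coeff_G]
  by_cases hle : Finsupp.single i 1 ≤ ν
  · rw [if_pos hle, coeff_A]
    have hi : ν i ≠ 0 := by
      have := Finsupp.single_le_iff.1 hle
      omega
    rw [← cntH_eq hi, cnt_split i ν]
    push_cast
    ring
  · rw [if_neg hle]
    have hi : ν i = 0 := by
      by_contra h
      exact hle (Finsupp.single_le_iff.2 (Nat.one_le_iff_ne_zero.2 h))
    rw [cntA_eq_cnt hi]
    ring

lemma G_eq : G N = 1 + ∑ i : Fin N, X i * A i := by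
  ext ν
  rw [map_add, map_sum, coeff_G]
  by_cases hν : ν = 0
  · subst hν
    rw [cnt_zero]
    have h0 : ∀ i : Fin N, coeff (0 : Fin N →₀ ℕ) (X i * A i) = 0 := fun i =>
      coeff_zero_X_mul (A i) i
    simp [h0, coeff_one]
  · rw [cnt_head_decomp hν]
    have hone : coeff ν (1 : MvPowerSeries (Fin N) ℝ) = 0 := by
      rw [coeff_one, if_neg hν]
    rw [hone, zero_add]
    push_cast
    apply Finset.sum_congr rfl
    intro i _
    rw [coeff_X_mul', coeff_A]
    by_cases hle : Finsupp.single i 1 ≤ ν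
    · rw [if_pos hle]
      have hi : ν i ≠ 0 := by
        have := Finsupp.single_le_iff.1 hle
        omega
      rw [← cntH_eq hi]
    · rw [if_neg hle]
      have hi : ν i = 0 := by
        by_contra h
        exact hle (Finsupp.single_le_iff.2 (Nat.one_le_iff_ne_zero.2 h))
      rw [cntH_eq_zero hi]
      simp

lemma main_inverse :
    ((1 - ∑ i : Fin N, X i * (1 + X i)⁻¹)⁻¹ : MvPowerSeries (Fin N) ℝ) = G N := by
  have hconst : ∀ i : Fin N,
      constantCoeff (1 + X i : MvPowerSeries (Fin N) ℝ) ≠ 0 := by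
    intro i
    rw [map_add, constantCoeff_one, constantCoeff_X]
    norm_num
  have hAinv : ∀ i : Fin N, A i = (1 + X i)⁻¹ * G N := by
    intro i
    rw [← one_add_X_mul_A i, ← mul_assoc, MvPowerSeries.inv_mul_cancel _ (hconst i), one_mul]
  have key : G N * (1 - ∑ i : Fin N, X i * (1 + X i)⁻¹) = 1 := by
    rw [mul_comm, sub_mul, one_mul, Finset.sum_mul]
    have : ∀ i : Fin N, (X i * (1 + X i)⁻¹) * G N = X i * A i := by
      intro i
      rw [mul_assoc, ← hAinv i]
    simp_rw [this]
    rw [G_eq]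
    ring
  have hc : constantCoeff (1 - ∑ i : Fin N, X i * (1 + X i)⁻¹ : MvPowerSeries (Fin N) ℝ) ≠ 0 := by
    rw [map_sub, map_one, map_sum]
    have : ∀ i : Fin N,
        constantCoeff (X i * (1 + X i)⁻¹ : MvPowerSeries (Fin N) ℝ) = 0 := by
      intro i
      rw [map_mul, constantCoeff_X, zero_mul]
    simp [this]
  rw [MvPowerSeries.inv_eq_iff_mul_eq_one hc]
  exact key

end SmirnovAux

theorem smirnov_count_eq_coeff (N n : ℕ) (ν : Fin N →₀ ℕ)
    (hν : ∑ i, ν i = n) :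
    (Nat.card {w : List (Fin N) // w.length = n ∧ w.Chain' (· ≠ ·) ∧
        ∀ i, w.count i = ν i} : ℝ) =
      MvPowerSeries.coeff ν
        ((1 - ∑ i : Fin N, X i * (1 + X i)⁻¹)⁻¹ : MvPowerSeries (Fin N) ℝ) := by
  rw [SmirnovAux.main_inverse, SmirnovAux.coeff_G]
  congr 1
  apply Nat.card_congr
  apply Equiv.subtypeEquivRight
  intro w
  constructor
  · rintro ⟨-, hc, hcnt⟩; exact ⟨hc, hcnt⟩
  · rintro ⟨hc, hcnt⟩
    exact ⟨by rw [SmirnovAux.length_of_counts hcnt, hν], hc, hcnt⟩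
end

section
/- The function f(x, y) = Σ_{n=0}^∞ ( x^n y^n/(n!)^2 + x^n y^{n+1}/(n!(n+1)!) + x^{n+1} y^n/((n+1)! n!) ), defined for all real x, y, satisfies the partial differential equation ∂²f/∂x∂y = f. -/
noncomputable def contBinom (x y : ℝ) : ℝ :=
  ∑' n : ℕ, (x ^ n * y ^ n / (n.factorial * n.factorial)
    + x ^ n * y ^ (n + 1) / (n.factorial * (n + 1).factorial)
    + x ^ (n + 1) * y ^ n / ((n + 1).factorial * n.factorial))

namespace ContBinomAux

/-- The `n`-th term of the series. -/
noncomputable def T (n : ℕ) (x y : ℝ) : ℝ :=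
  x ^ n * y ^ n / (n.factorial * n.factorial)
    + x ^ n * y ^ (n + 1) / (n.factorial * (n + 1).factorial)
    + x ^ (n + 1) * y ^ n / ((n + 1).factorial * n.factorial)

/-- Termwise derivative in `y`. -/
noncomputable def D1 (n : ℕ) (x y : ℝ) : ℝ :=
  x ^ n * ((n : ℝ) * y ^ (n - 1)) / (n.factorial * n.factorial)
    + x ^ n * (((n : ℕ) + 1 : ℕ) * y ^ (n + 1 - 1) : ℝ) / (n.factorial * (n + 1).factorial)
    + x ^ (n + 1) * ((n : ℝ) * y ^ (n - 1)) / ((n + 1).factorial * n.factorial)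

/-- Termwise derivative of `D1` in `x`. -/
noncomputable def D2 (n : ℕ) (x y : ℝ) : ℝ :=
  ((n : ℝ) * x ^ (n - 1)) * ((n : ℝ) * y ^ (n - 1)) / (n.factorial * n.factorial)
    + ((n : ℝ) * x ^ (n - 1)) * (((n : ℕ) + 1 : ℕ) * y ^ (n + 1 - 1) : ℝ)
        / (n.factorial * (n + 1).factorial)
    + (((n : ℕ) + 1 : ℕ) * x ^ (n + 1 - 1) : ℝ) * ((n : ℝ) * y ^ (n - 1))
        / ((n + 1).factorial * n.factorial)

lemma contBinom_eq (x y : ℝ) : contBinom x y = ∑' n, T n x y := rfl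

lemma hasDerivAt_T_y (n : ℕ) (x y : ℝ) :
    HasDerivAt (fun y' => T n x y') (D1 n x y) y := by
  unfold T D1
  exact ((((hasDerivAt_pow n y).const_mul (x ^ n)).div_const _).add
    ((((hasDerivAt_pow (n + 1) y).const_mul (x ^ n)).div_const _))).add
    (((hasDerivAt_pow n y).const_mul (x ^ (n + 1))).div_const _)

lemma hasDerivAt_D1_x (n : ℕ) (x y : ℝ) :
    HasDerivAt (fun x' => D1 n x' y) (D2 n x y) x := by
  unfold D1 D2
  exact ((((hasDerivAt_pow n x).mul_const _).div_const _).add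
    ((((hasDerivAt_pow n x).mul_const _).div_const _))).add
    (((hasDerivAt_pow (n + 1) x).mul_const _).div_const _)

lemma D2_zero (x y : ℝ) : D2 0 x y = 0 := by
  simp [D2]

lemma D2_succ (n : ℕ) (x y : ℝ) : D2 (n + 1) x y = T n x y := by
  have h0 : ((n.factorial : ℝ)) ≠ 0 := Nat.cast_ne_zero.2 n.factorial_ne_zero
  have h1 : ((n : ℝ) + 1) ≠ 0 := by positivity
  have h2 : ((n : ℝ) + 2) ≠ 0 := by positivity
  unfold D2 T
  rw [Nat.factorial_succ (n + 1), Nat.factorial_succ n]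
  push_cast
  field_simp

/-- The summable bound. -/
noncomputable def u (R S : ℝ) (n : ℕ) : ℝ :=
  3 * (((n : ℝ) + 1) * R ^ (n + 1) * (((n : ℝ) + 1) * S ^ (n + 1)) / n.factorial)

lemma summable_u {R S : ℝ} (hR : 0 ≤ R) (hS : 0 ≤ S) : Summable (u R S) := by
  refine Summable.of_nonneg_of_le (fun n => by unfold u; positivity) (fun n => ?_)
    ((Real.summable_pow_div_factorial (4 * (R * S))).mul_left (3 * (R * S)))
  have hfac : (0 : ℝ) < n.factorial := by positivity
  have hn : ((n : ℝ) + 1) ≤ 2 ^ n := by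
    exact_mod_cast Nat.succ_le_of_lt (Nat.lt_two_pow_self (n := n))
  have key : ((n : ℝ) + 1) * R ^ (n + 1) * (((n : ℝ) + 1) * S ^ (n + 1))
      ≤ (R * S) * (4 * (R * S)) ^ n := by
    calc ((n : ℝ) + 1) * R ^ (n + 1) * (((n : ℝ) + 1) * S ^ (n + 1))
        = (((n : ℝ) + 1) * ((n : ℝ) + 1)) * ((R ^ n * S ^ n) * (R * S)) := by ring
      _ ≤ ((2 : ℝ) ^ n * 2 ^ n) * ((R ^ n * S ^ n) * (R * S)) :=
          mul_le_mul_of_nonneg_right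
            (mul_le_mul hn hn (by positivity) (by positivity)) (by positivity)
      _ = (R * S) * (4 * (R * S)) ^ n := by
          rw [show (4 : ℝ) * (R * S) = (2 * R) * (2 * S) by ring, mul_pow, mul_pow, mul_pow]
          ring
  unfold u
  rw [show (3 : ℝ) * (R * S) * ((4 * (R * S)) ^ n / (n.factorial : ℝ))
      = 3 * ((R * S) * (4 * (R * S)) ^ n) / n.factorial by ring,
    show (3 : ℝ) * (((n : ℝ) + 1) * R ^ (n + 1) * (((n : ℝ) + 1) * S ^ (n + 1)) / n.factorial)
      = 3 * (((n : ℝ) + 1) * R ^ (n + 1) * (((n : ℝ) + 1) * S ^ (n + 1))) / n.factorial by ring]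
  exact (div_le_div_iff_of_pos_right hfac).2 (by linarith)

/-- Generic bound for one monomial term. -/
lemma mono_bound {R S x y : ℝ} (hR : 1 ≤ R) (hS : 1 ≤ S) (hx : |x| ≤ R) (hy : |y| ≤ S)
    {n : ℕ} {a b : ℝ} (ha0 : 0 ≤ a) (hb0 : 0 ≤ b) (ha : a ≤ (n : ℝ) + 1) (hb : b ≤ (n : ℝ) + 1)
    {p q : ℕ} (hp : p ≤ n + 1) (hq : q ≤ n + 1) {d : ℝ} (hd : (n.factorial : ℝ) ≤ d) :
    |a * x ^ p * (b * y ^ q) / d| ≤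
      ((n : ℝ) + 1) * R ^ (n + 1) * (((n : ℝ) + 1) * S ^ (n + 1)) / n.factorial := by
  have hfac : (0 : ℝ) < n.factorial := by positivity
  have hdpos : (0 : ℝ) < d := lt_of_lt_of_le hfac hd
  rw [abs_div, abs_of_pos hdpos, abs_mul, abs_mul, abs_mul, abs_of_nonneg ha0, abs_of_nonneg hb0,
    abs_pow, abs_pow]
  have hxp : |x| ^ p ≤ R ^ (n + 1) :=
    le_trans (pow_le_pow_left₀ (abs_nonneg x) hx p) (pow_le_pow_right₀ hR hp)
  have hyq : |y| ^ q ≤ S ^ (n + 1) :=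
    le_trans (pow_le_pow_left₀ (abs_nonneg y) hy q) (pow_le_pow_right₀ hS hq)
  exact div_le_div₀ (by positivity)
    (mul_le_mul (mul_le_mul ha hxp (by positivity) (by positivity))
      (mul_le_mul hb hyq (by positivity) (by positivity))
      (by positivity) (by positivity)) hfac hd

lemma le_fac_mul_self (n : ℕ) : (n.factorial : ℝ) ≤ (n.factorial : ℝ) * n.factorial :=
  le_mul_of_one_le_right (by positivity) (by exact_mod_cast n.factorial_pos)

lemma le_fac_mul_succ (n : ℕ) : (n.factorial : ℝ) ≤ (n.factorial : ℝ) * (n + 1).factorial :=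
  le_mul_of_one_le_right (by positivity) (by exact_mod_cast (n + 1).factorial_pos)

lemma le_succ_mul_fac (n : ℕ) : (n.factorial : ℝ) ≤ ((n + 1).factorial : ℝ) * n.factorial :=
  le_mul_of_one_le_left (by positivity) (by exact_mod_cast (n + 1).factorial_pos)

section Bounds

variable {R S x y : ℝ}

lemma bound_T (hR : 1 ≤ R) (hS : 1 ≤ S) (hx : |x| ≤ R) (hy : |y| ≤ S) (n : ℕ) :
    |T n x y| ≤ u R S n := by
  have h1n : (1 : ℝ) ≤ (n : ℝ) + 1 := by linarith [(n.cast_nonneg : (0:ℝ) ≤ n)]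
  have h10 : (0 : ℝ) ≤ 1 := zero_le_one
  have hb1 := mono_bound hR hS hx hy (n := n) (a := (1 : ℝ)) (b := (1 : ℝ)) h10 h10 h1n h1n
    (Nat.le_succ n) (Nat.le_succ n) (le_fac_mul_self n)
  have hb2 := mono_bound hR hS hx hy (n := n) (a := (1 : ℝ)) (b := (1 : ℝ)) h10 h10 h1n h1n
    (Nat.le_succ n) (le_refl (n + 1)) (le_fac_mul_succ n)
  have hb3 := mono_bound hR hS hx hy (n := n) (a := (1 : ℝ)) (b := (1 : ℝ)) h10 h10 h1n h1n
    (le_refl (n + 1)) (Nat.le_succ n) (le_succ_mul_fac n)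
  simp only [one_mul] at hb1 hb2 hb3
  have hu : u R S n
      = 3 * (((n : ℝ) + 1) * R ^ (n + 1) * (((n : ℝ) + 1) * S ^ (n + 1)) / n.factorial) := rfl
  unfold T
  refine le_trans ((abs_add_le _ _).trans (add_le_add_left (abs_add_le _ _) _)) ?_
  rw [hu]; linarith

lemma bound_D1 (hR : 1 ≤ R) (hS : 1 ≤ S) (hx : |x| ≤ R) (hy : |y| ≤ S) (n : ℕ) :
    |D1 n x y| ≤ u R S n := by
  have h1n : (1 : ℝ) ≤ (n : ℝ) + 1 := by linarith [(n.cast_nonneg : (0:ℝ) ≤ n)]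
  have h10 : (0 : ℝ) ≤ 1 := zero_le_one
  have hnn : ((n : ℝ)) ≤ (n : ℝ) + 1 := by linarith
  have hn0 : (0 : ℝ) ≤ (n : ℝ) := Nat.cast_nonneg n
  have hc0 : (0 : ℝ) ≤ (((n + 1 : ℕ)) : ℝ) := Nat.cast_nonneg _
  have hcle : (((n + 1 : ℕ)) : ℝ) ≤ (n : ℝ) + 1 := by push_cast; exact le_rfl
  have hb1 := mono_bound hR hS hx hy (n := n) (a := (1 : ℝ)) (b := ((n : ℕ) : ℝ)) h10 hn0 h1n hnn
    (Nat.le_succ n) ((Nat.sub_le n 1).trans (Nat.le_succ n)) (le_fac_mul_self n)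
  have hb2 := mono_bound hR hS hx hy (n := n) (a := (1 : ℝ)) (b := (((n + 1 : ℕ)) : ℝ)) h10 hc0
    h1n hcle (Nat.le_succ n) (Nat.sub_le (n + 1) 1) (le_fac_mul_succ n)
  have hb3 := mono_bound hR hS hx hy (n := n) (a := (1 : ℝ)) (b := ((n : ℕ) : ℝ)) h10 hn0 h1n hnn
    (le_refl (n + 1)) ((Nat.sub_le n 1).trans (Nat.le_succ n)) (le_succ_mul_fac n)
  simp only [one_mul] at hb1 hb2 hb3
  have hu : u R S n
      = 3 * (((n : ℝ) + 1) * R ^ (n + 1) * (((n : ℝ) + 1) * S ^ (n + 1)) / n.factorial) := rfl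
  unfold D1
  refine le_trans ((abs_add_le _ _).trans (add_le_add_left (abs_add_le _ _) _)) ?_
  rw [hu]; linarith

lemma bound_D2 (hR : 1 ≤ R) (hS : 1 ≤ S) (hx : |x| ≤ R) (hy : |y| ≤ S) (n : ℕ) :
    |D2 n x y| ≤ u R S n := by
  have hnn : ((n : ℝ)) ≤ (n : ℝ) + 1 := by linarith [(n.cast_nonneg : (0:ℝ) ≤ n)]
  have hn0 : (0 : ℝ) ≤ (n : ℝ) := Nat.cast_nonneg n
  have hc0 : (0 : ℝ) ≤ (((n + 1 : ℕ)) : ℝ) := Nat.cast_nonneg _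
  have hcle : (((n + 1 : ℕ)) : ℝ) ≤ (n : ℝ) + 1 := by push_cast; exact le_rfl
  have hsub : n - 1 ≤ n + 1 := (Nat.sub_le n 1).trans (Nat.le_succ n)
  have hsub' : n + 1 - 1 ≤ n + 1 := Nat.sub_le (n + 1) 1
  have hb1 := mono_bound hR hS hx hy (n := n) (a := ((n : ℕ) : ℝ)) (b := ((n : ℕ) : ℝ)) hn0 hn0
    hnn hnn hsub hsub (le_fac_mul_self n)
  have hb2 := mono_bound hR hS hx hy (n := n) (a := ((n : ℕ) : ℝ)) (b := (((n + 1 : ℕ)) : ℝ))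
    hn0 hc0 hnn hcle hsub hsub' (le_fac_mul_succ n)
  have hb3 := mono_bound hR hS hx hy (n := n) (a := (((n + 1 : ℕ)) : ℝ)) (b := ((n : ℕ) : ℝ))
    hc0 hn0 hcle hnn hsub' hsub (le_succ_mul_fac n)
  have hu : u R S n
      = 3 * (((n : ℝ) + 1) * R ^ (n + 1) * (((n : ℝ) + 1) * S ^ (n + 1)) / n.factorial) := rfl
  unfold D2
  refine le_trans ((abs_add_le _ _).trans (add_le_add_left (abs_add_le _ _) _)) ?_
  rw [hu]; linarith

end Bounds

lemma summable_T (x y : ℝ) : Summable fun n => T n x y :=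
  Summable.of_norm_bounded (summable_u (R := |x| + 1) (S := |y| + 1)
      (by positivity) (by positivity))
    fun n => bound_T (by linarith [abs_nonneg x]) (by linarith [abs_nonneg y])
      (by linarith) (by linarith) n

lemma summable_D1 (x y : ℝ) : Summable fun n => D1 n x y :=
  Summable.of_norm_bounded (summable_u (R := |x| + 1) (S := |y| + 1)
      (by positivity) (by positivity))
    fun n => bound_D1 (by linarith [abs_nonneg x]) (by linarith [abs_nonneg y])
      (by linarith) (by linarith) n

lemma summable_D2 (x y : ℝ) : Summable fun n => D2 n x y :=
  Summable.of_norm_bounded (summable_u (R := |x| + 1) (S := |y| + 1)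
      (by positivity) (by positivity))
    fun n => bound_D2 (by linarith [abs_nonneg x]) (by linarith [abs_nonneg y])
      (by linarith) (by linarith) n

lemma hasDerivAt_y (x y : ℝ) :
    HasDerivAt (fun y' => contBinom x y') (∑' n, D1 n x y) y := by
  have hR : (1 : ℝ) ≤ |x| + 1 := by linarith [abs_nonneg x]
  have hS : (1 : ℝ) ≤ |y| + 1 := by linarith [abs_nonneg y]
  have h := hasDerivAt_tsum_of_isPreconnected
    (u := u (|x| + 1) (|y| + 1)) (g := fun n y' => T n x y') (g' := fun n y' => D1 n x y')
    (summable_u (by positivity) (by positivity))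
    (Metric.isOpen_ball (x := (0 : ℝ)) (ε := |y| + 1))
    ((convex_ball (0 : ℝ) (|y| + 1)).isPreconnected)
    (fun n y' _ => hasDerivAt_T_y n x y')
    (fun n y' hy' => by
      rw [Real.norm_eq_abs]
      have h' : |y'| < |y| + 1 := by
        simpa [Real.norm_eq_abs] using mem_ball_zero_iff.1 hy'
      exact bound_D1 hR hS (by linarith) h'.le n)
    (mem_ball_zero_iff.2 (by rw [Real.norm_eq_abs]; linarith))
    (summable_T x y)
    (mem_ball_zero_iff.2 (by rw [Real.norm_eq_abs]; linarith))
  simpa only [← contBinom_eq] using h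

lemma hasDerivAt_x (x y : ℝ) :
    HasDerivAt (fun x' => ∑' n, D1 n x' y) (∑' n, D2 n x y) x := by
  have hR : (1 : ℝ) ≤ |x| + 1 := by linarith [abs_nonneg x]
  have hS : (1 : ℝ) ≤ |y| + 1 := by linarith [abs_nonneg y]
  exact hasDerivAt_tsum_of_isPreconnected
    (u := u (|x| + 1) (|y| + 1)) (g := fun n x' => D1 n x' y) (g' := fun n x' => D2 n x' y)
    (summable_u (by positivity) (by positivity))
    (Metric.isOpen_ball (x := (0 : ℝ)) (ε := |x| + 1))
    ((convex_ball (0 : ℝ) (|x| + 1)).isPreconnected)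
    (fun n x' _ => hasDerivAt_D1_x n x' y)
    (fun n x' hx' => by
      rw [Real.norm_eq_abs]
      have h' : |x'| < |x| + 1 := by
        simpa [Real.norm_eq_abs] using mem_ball_zero_iff.1 hx'
      exact bound_D2 hR hS h'.le (by linarith) n)
    (mem_ball_zero_iff.2 (by rw [Real.norm_eq_abs]; linarith))
    (summable_D1 x y)
    (mem_ball_zero_iff.2 (by rw [Real.norm_eq_abs]; linarith))

end ContBinomAux

open ContBinomAux in
theorem contBinom_pde (x y : ℝ) :
    deriv (fun x' => deriv (fun y' => contBinom x' y') y) x = contBinom x y := by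
  have heq : (fun x' => deriv (fun y' => contBinom x' y') y)
      = fun x' => ∑' n, D1 n x' y := by
    funext x'
    exact (hasDerivAt_y x' y).deriv
  rw [heq, (hasDerivAt_x x y).deriv]
  rw [Summable.tsum_eq_zero_add (summable_D2 x y), D2_zero, zero_add]
  rw [contBinom_eq]
  exact tsum_congr fun n => D2_succ n x y
end
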